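/- Let Q ∈ ℝ^{n×n} be symmetric positive definite, a ∈ ℝ^n, c ∈ ℝ, x ∈ ℝ^n and w ∈ ℝ. Set κ = aᵀQ⁻¹a and γ = Q⁻¹a/(1 + κ). Then xᵀQx + (c + w − aᵀx)² = c² + 2c(w − aᵀx) + (x − w·γ)ᵀ(Q + aaᵀ)(x − w·γ) + w²/(1 + κ). -/

import Mathlib

open Matrix

lemma vecMulVec_mulVec' {n : ℕ} (a b v : Fin n → ℝ) :
    (vecMulVec a b).mulVec v = (b ⬝ᵥ v) • a := by
  ext i
  simp [mulVec, vecMulVec_apply, dotProduct, Finset.mul_sum, Finset.sum_mul,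
    mul_comm, mul_left_comm]

/-- Perspective decomposition identity: with `κ = aᵀQ⁻¹a` and `γ = Q⁻¹a/(1+κ)`,
`xᵀQx + (c + w - aᵀx)² = c² + 2c(w - aᵀx) + (x - wγ)ᵀ(Q + aaᵀ)(x - wγ) + w²/(1+κ)`. -/
theorem perspective_identity
    (n : ℕ) (Q : Matrix (Fin n) (Fin n) ℝ) (hQ : Q.PosDef) (a : Fin n → ℝ) (c : ℝ)
    (x : Fin n → ℝ) (w : ℝ) :
    x ⬝ᵥ Q.mulVec x + (c + w - a ⬝ᵥ x) ^ 2 =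
      c ^ 2 + 2 * c * (w - a ⬝ᵥ x) +
        (x - w • ((1 / (1 + a ⬝ᵥ Q⁻¹.mulVec a)) • Q⁻¹.mulVec a)) ⬝ᵥ
          (Q + vecMulVec a a).mulVec
            (x - w • ((1 / (1 + a ⬝ᵥ Q⁻¹.mulVec a)) • Q⁻¹.mulVec a)) +
        w ^ 2 / (1 + a ⬝ᵥ Q⁻¹.mulVec a) := by
  set g := Q⁻¹.mulVec a with hg
  set κ := a ⬝ᵥ g with hκ
  have hdet : IsUnit Q.det := isUnit_iff_ne_zero.mpr (ne_of_gt hQ.det_pos)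
  have hQg : Q.mulVec g = a := by
    rw [hg, mulVec_mulVec, Matrix.mul_nonsing_inv Q hdet, one_mulVec]
  have hκ0 : 0 ≤ κ := by
    have := hQ.inv.posSemidef.dotProduct_mulVec_nonneg a
    simpa [hκ, hg] using this
  have hδ : (1 : ℝ) + κ ≠ 0 := by positivity
  have hT : Qᵀ = Q := by simpa using hQ.1.eq
  have hsymm : g ⬝ᵥ Q.mulVec x = a ⬝ᵥ x := by
    rw [dotProduct_mulVec, ← mulVec_transpose, hT, hQg]
  have hxQg : x ⬝ᵥ Q.mulVec g = a ⬝ᵥ x := by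
    rw [hQg, dotProduct_comm]
  have hgQg : g ⬝ᵥ Q.mulVec g = κ := by rw [hQg, hκ, dotProduct_comm]
  have hag : a ⬝ᵥ g = κ := hκ.symm
  have hga : g ⬝ᵥ a = κ := dotProduct_comm g a
  have hxa : x ⬝ᵥ a = a ⬝ᵥ x := dotProduct_comm x a
  simp only [mulVec_add, add_mulVec, vecMulVec_mulVec', mulVec_sub, mulVec_smul,
    dotProduct_sub, sub_dotProduct, dotProduct_smul, smul_dotProduct, dotProduct_add,
    smul_eq_mul, smul_smul, hsymm, hxQg, hgQg, hag, hga, hxa]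
  field_simp
  ring
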